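/- Let R = ℤ[s, s⁻¹, t, t⁻¹] and consider the free R-module with basis {u, v}. The quotient of R·u ⊕ R·v by the submodule generated by (1−t)u + v, (1−s+s²)u, and (1+st)v is isomorphic as an R-module to R/(R·(1−s+s²) + R·((1+st)(1−t))). -/
import Mathlib


/-- `R = ℤ[s,s⁻¹,t,t⁻¹]`, the group ring of the free abelian group with basis `{s, t}`. -/
noncomputable abbrev GroupRingZ2 : Type := AddMonoidAlgebra ℤ (ℤ × ℤ)

/-- The generator `s` of the group ring. -/
noncomputable def sGen : GroupRingZ2 := AddMonoidAlgebra.single (1, 0) 1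

/-- The generator `t` of the group ring. -/
noncomputable def tGen : GroupRingZ2 := AddMonoidAlgebra.single (0, 1) 1

/-- Basis vector `u` of `R²`. -/
noncomputable def uV : Fin 2 → GroupRingZ2 := Pi.single 0 1
/-- Basis vector `v` of `R²`. -/
noncomputable def vV : Fin 2 → GroupRingZ2 := Pi.single 1 1

/-- The submodule of `R²` generated by `(1−t)u + v`, `(1−s+s²)u` and `(1+st)v`. -/
noncomputable def imB3 : Submodule GroupRingZ2 (Fin 2 → GroupRingZ2) :=
  Submodule.span GroupRingZ2
    {(1 - tGen) • uV + vV, (1 - sGen + sGen ^ 2) • uV, (1 + sGen * tGen) • vV}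

noncomputable def idealB3 : Ideal GroupRingZ2 :=
  Ideal.span {1 - sGen + sGen ^ 2, (1 + sGen * tGen) * (1 - tGen)}

/-- `f ↦ f 0 - (1 - t) * f 1`. -/
noncomputable def phiB3 : (Fin 2 → GroupRingZ2) →ₗ[GroupRingZ2] GroupRingZ2 :=
  LinearMap.proj 0 - (1 - tGen) • LinearMap.proj 1

@[simp] lemma uV0 : uV 0 = 1 := rfl
@[simp] lemma uV1 : uV 1 = 0 := rfl
@[simp] lemma vV0 : vV 0 = 0 := rfl
@[simp] lemma vV1 : vV 1 = 1 := rfl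

lemma phiB3_apply (f : Fin 2 → GroupRingZ2) :
    phiB3 f = f 0 - (1 - tGen) * f 1 := rfl

lemma eq_comb (f : Fin 2 → GroupRingZ2) : f = f 0 • uV + f 1 • vV := by
  funext i
  fin_cases i <;> simp

/-- Let `R = ℤ[s,s⁻¹,t,t⁻¹]` and let `u, v` be a basis of the free `R`-module `R²`.
The quotient of `R²` by the submodule generated by `(1−t)u + v`, `(1−s+s²)u` and
`(1+st)v` is isomorphic as an `R`-module to `R/(R·(1−s+s²) + R·((1+st)(1−t)))`.
(Type `B₃`.) -/
theorem quotient_B3 :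
    Nonempty
      (((Fin 2 → GroupRingZ2) ⧸ imB3) ≃ₗ[GroupRingZ2]
        (GroupRingZ2 ⧸
          Ideal.span {1 - sGen + sGen ^ 2, (1 + sGen * tGen) * (1 - tGen)})) := by
  have hmem1 : (1 - sGen + sGen ^ 2 : GroupRingZ2) ∈ idealB3 :=
    Ideal.subset_span (Set.mem_insert _ _)
  have hmem2 : ((1 + sGen * tGen) * (1 - tGen) : GroupRingZ2) ∈ idealB3 :=
    Ideal.subset_span (Set.mem_insert_of_mem _ rfl)
  -- forward map
  have hker : imB3 ≤ LinearMap.ker ((Submodule.mkQ idealB3).comp phiB3) := by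
    rw [imB3, Submodule.span_le]
    rintro x (rfl | rfl | rfl) <;>
      simp only [SetLike.mem_coe, LinearMap.mem_ker, LinearMap.comp_apply,
        Submodule.mkQ_apply, Submodule.Quotient.mk_eq_zero, phiB3_apply,
        Pi.add_apply, Pi.smul_apply, uV0, uV1, vV0, vV1, smul_eq_mul,
        mul_one, mul_zero, sub_zero, add_zero, zero_add, sub_self]
    · exact idealB3.zero_mem
    · exact hmem1
    · rw [show (0 : GroupRingZ2) - (1-tGen)*(1+sGen*tGen) = -((1 + sGen*tGen)*(1-tGen)) by ring]
      exact idealB3.neg_mem hmem2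
  set F : ((Fin 2 → GroupRingZ2) ⧸ imB3) →ₗ[GroupRingZ2] GroupRingZ2 ⧸ idealB3 :=
    Submodule.liftQ imB3 ((Submodule.mkQ idealB3).comp phiB3) hker with hF
  -- backward map
  have hu1 : (1 - sGen + sGen ^ 2) • uV ∈ imB3 :=
    Submodule.subset_span (Set.mem_insert_of_mem _ (Set.mem_insert _ _))
  have huv : (1 - tGen) • uV + vV ∈ imB3 :=
    Submodule.subset_span (Set.mem_insert _ _)
  have hv : (1 + sGen * tGen) • vV ∈ imB3 :=
    Submodule.subset_span (Set.mem_insert_of_mem _ (Set.mem_insert_of_mem _ rfl))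
  have hu2 : ((1 + sGen * tGen) * (1 - tGen)) • uV ∈ imB3 := by
    have h : ((1 + sGen * tGen) * (1 - tGen)) • uV
        = (1 + sGen * tGen) • ((1 - tGen) • uV + vV) - (1 + sGen * tGen) • vV := by
      module
    rw [h]
    exact Submodule.sub_mem _ (Submodule.smul_mem _ _ huv) hv
  have hker' : idealB3 ≤ LinearMap.ker
      ((Submodule.mkQ imB3).comp (LinearMap.toSpanSingleton GroupRingZ2 _ uV)) := by
    rw [idealB3, Ideal.span_le]
    rintro x (rfl | rfl) <;>
      simpa only [SetLike.mem_coe, LinearMap.mem_ker, LinearMap.comp_apply,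
        LinearMap.toSpanSingleton_apply, Submodule.mkQ_apply,
        Submodule.Quotient.mk_eq_zero] using (by first | exact hu1 | exact hu2)
  set G : (GroupRingZ2 ⧸ idealB3) →ₗ[GroupRingZ2] (Fin 2 → GroupRingZ2) ⧸ imB3 :=
    Submodule.liftQ idealB3
      ((Submodule.mkQ imB3).comp (LinearMap.toSpanSingleton GroupRingZ2 _ uV)) hker' with hG
  refine ⟨LinearEquiv.ofLinear F G ?_ ?_⟩
  · refine LinearMap.ext fun r => ?_
    obtain ⟨r, rfl⟩ := Submodule.mkQ_surjective idealB3 r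
    show Submodule.Quotient.mk (phiB3 (r • uV)) = Submodule.Quotient.mk r
    congr 1
    simp [phiB3_apply]
  · refine LinearMap.ext fun f => ?_
    obtain ⟨f, rfl⟩ := Submodule.mkQ_surjective imB3 f
    show Submodule.Quotient.mk ((phiB3 f) • uV) = Submodule.Quotient.mk f
    rw [Submodule.Quotient.eq, phiB3_apply]
    have h : (f 0 - (1 - tGen) * f 1) • uV - f
        = -(f 1 • ((1 - tGen) • uV + vV)) := by
      funext i
      fin_cases i <;> simp [uV, vV, smul_eq_mul] <;> ring
    rw [h]
    exact Submodule.neg_mem _ (Submodule.smul_mem _ _ huv)
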